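/- Let H be the discrete Heisenberg group, the group of 3×3 upper unitriangular matrices with integer entries, let a ∈ H be the matrix with (1,2)-entry 1 and (1,3)-, (2,3)-entries 0, and b ∈ H the matrix with (2,3)-entry 1 and (1,2)-, (1,3)-entries 0, and let d be the word metric on H with respect to the symmetric generating set S = {a, a⁻¹, b, b⁻¹}. Then there exists a weakly-geodesic ray γ : T → H such that for every geodesic ray γ' : T' → H there exist y, z ∈ H with lim_{t→∞, t∈T} (d(γ(t),y) − d(γ(t),z)) ≠ lim_{t→∞, t∈T'} (d(γ'(t),y) − d(γ'(t),z)); that is, the metric boundary of this Cayley graph of the discrete Heisenberg group contains a point which is not a Busemann point. -/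

import Mathlib

open Filter Topology

/-- `T` is a valid domain for a ray: an unbounded subset of `[0,∞)` containing `0`. -/
def IsRayDomain (T : Set ℝ) : Prop :=
  T ⊆ Set.Ici (0 : ℝ) ∧ 0 ∈ T ∧ ∀ M : ℝ, ∃ t ∈ T, M < t

/-- A weakly-geodesic ray for the distance function `d`. -/
def WeaklyGeodesicRay {X : Type*} (d : X → X → ℝ) (T : Set ℝ) (γ : ℝ → X) : Prop :=
  ∀ y : X, ∀ ε : ℝ, 0 < ε → ∃ N : ℝ, ∀ s ∈ T, ∀ t ∈ T, N ≤ s → N ≤ t →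
    |d (γ t) (γ 0) - t| < ε ∧ |d (γ t) y - d (γ s) y - (t - s)| < ε

/-- An almost-geodesic ray for the distance function `d`. -/
def AlmostGeodesicRay {X : Type*} (d : X → X → ℝ) (T : Set ℝ) (γ : ℝ → X) : Prop :=
  ∀ ε : ℝ, 0 < ε → ∃ N : ℝ, ∀ s ∈ T, ∀ t ∈ T, N ≤ s → s ≤ t →
    |d (γ t) (γ s) + d (γ s) (γ 0) - t| < ε

/-- A geodesic ray for the distance function `d`. -/
def GeodesicRay {X : Type*} (d : X → X → ℝ) (T : Set ℝ) (γ : ℝ → X) : Prop :=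
  ∀ s ∈ T, ∀ t ∈ T, d (γ s) (γ t) = |s - t|

/-- `L` is the limit of `d(γ(t),y) - d(γ(t),z)` as `t → ∞` along `T`. -/
def RayLimit {X : Type*} (d : X → X → ℝ) (T : Set ℝ) (γ : ℝ → X) (y z : X) (L : ℝ) : Prop :=
  Tendsto (fun t => d (γ t) y - d (γ t) z) (atTop ⊓ 𝓟 T) (𝓝 L)

/-- The word metric on a group `G` with respect to a generating set `S`:
`wordDist S g h` is the least `n` such that `g⁻¹ * h` is a product of `n` elements of `S`. -/
noncomputable def wordDist {G : Type*} [Group G] (S : Set G) (g h : G) : ℕ :=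
  sInf {n | ∃ l : List G, l.length = n ∧ (∀ x ∈ l, x ∈ S) ∧ l.prod = g⁻¹ * h}

/-- The set of 3×3 upper unitriangular integer matrices. -/
def Unitriangular3 : Set (Matrix (Fin 3) (Fin 3) ℤ) :=
  {A | A 0 0 = 1 ∧ A 1 1 = 1 ∧ A 2 2 = 1 ∧ A 1 0 = 0 ∧ A 2 0 = 0 ∧ A 2 1 = 0}


namespace Stmt19Aux

@[ext]
structure Hb where
  x : ℤ
  y : ℤ
  z : ℤ

namespace Hb

instance : Mul Hb := ⟨fun g h => ⟨g.x + h.x, g.y + h.y, g.z + h.z + g.x * h.y⟩⟩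
instance : One Hb := ⟨⟨0, 0, 0⟩⟩
instance : Inv Hb := ⟨fun g => ⟨-g.x, -g.y, g.x * g.y - g.z⟩⟩

@[simp] lemma mul_x (g h : Hb) : (g * h).x = g.x + h.x := rfl
@[simp] lemma mul_y (g h : Hb) : (g * h).y = g.y + h.y := rfl
@[simp] lemma mul_z (g h : Hb) : (g * h).z = g.z + h.z + g.x * h.y := rfl
@[simp] lemma one_x : (1 : Hb).x = 0 := rfl
@[simp] lemma one_y : (1 : Hb).y = 0 := rfl
@[simp] lemma one_z : (1 : Hb).z = 0 := rfl
@[simp] lemma inv_x (g : Hb) : (g⁻¹).x = -g.x := rfl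
@[simp] lemma inv_y (g : Hb) : (g⁻¹).y = -g.y := rfl
@[simp] lemma inv_z (g : Hb) : (g⁻¹).z = g.x * g.y - g.z := rfl

instance : Group Hb where
  mul_assoc g h k := by ext <;> simp <;> ring
  one_mul g := by ext <;> simp
  mul_one g := by ext <;> simp
  inv_mul_cancel g := by ext <;> simp <;> ring

def A : Hb := ⟨1, 0, 0⟩
def B : Hb := ⟨0, 1, 0⟩

def S0 : Set Hb := {A, A⁻¹, B, B⁻¹}

lemma mem_S0 {s : Hb} (hs : s ∈ S0) : s = A ∨ s = A⁻¹ ∨ s = B ∨ s = B⁻¹ := hs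

lemma inv_mem_S0 {s : Hb} (hs : s ∈ S0) : s⁻¹ ∈ S0 := by
  rcases mem_S0 hs with h | h | h | h <;> subst h <;>
    simp [S0, Set.mem_insert_iff]

end Hb

end Stmt19Aux

namespace Stmt19Aux
namespace Hb

/-! ### Word length -/

noncomputable def W (g : Hb) : ℕ :=
  sInf {n | ∃ l : List Hb, l.length = n ∧ (∀ x ∈ l, x ∈ S0) ∧ l.prod = g}

lemma pow_A (n : ℕ) : (A : Hb) ^ n = ⟨n, 0, 0⟩ := by
  induction n with
  | zero => rfl
  | succ n ih => rw [pow_succ, ih]; ext <;> simp [A] <;> push_cast <;> ring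

lemma pow_Ainv (n : ℕ) : (A⁻¹ : Hb) ^ n = ⟨-n, 0, 0⟩ := by
  induction n with
  | zero => rfl
  | succ n ih => rw [pow_succ, ih]; ext <;> simp [A] <;> push_cast <;> ring

lemma pow_B (n : ℕ) : (B : Hb) ^ n = ⟨0, n, 0⟩ := by
  induction n with
  | zero => rfl
  | succ n ih => rw [pow_succ, ih]; ext <;> simp [B] <;> push_cast <;> ring

lemma pow_Binv (n : ℕ) : (B⁻¹ : Hb) ^ n = ⟨0, -n, 0⟩ := by
  induction n with
  | zero => rfl
  | succ n ih => rw [pow_succ, ih]; ext <;> simp [B] <;> push_cast <;> ring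

lemma A_mem : (A : Hb) ∈ S0 := by simp [S0]
lemma Ainv_mem : (A⁻¹ : Hb) ∈ S0 := by simp [S0]
lemma B_mem : (B : Hb) ∈ S0 := by simp [S0]
lemma Binv_mem : (B⁻¹ : Hb) ∈ S0 := by simp [S0]

/-- a word for `⟨k,0,0⟩` of length `k.natAbs` -/
lemma wordX (k : ℤ) : ∃ l : List Hb, l.length = k.natAbs ∧ (∀ x ∈ l, x ∈ S0) ∧
    l.prod = ⟨k, 0, 0⟩ := by
  rcases le_or_gt 0 k with hk | hk
  · refine ⟨List.replicate k.natAbs A, by simp, ?_, ?_⟩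
    · intro x hx; rw [List.eq_of_mem_replicate hx]; exact A_mem
    · rw [List.prod_replicate, pow_A]
      ext <;> simp [Int.natAbs_of_nonneg hk]
  · refine ⟨List.replicate k.natAbs A⁻¹, by simp, ?_, ?_⟩
    · intro x hx; rw [List.eq_of_mem_replicate hx]; exact Ainv_mem
    · rw [List.prod_replicate, pow_Ainv]
      ext <;> simp [abs_of_neg hk]

lemma wordY (k : ℤ) : ∃ l : List Hb, l.length = k.natAbs ∧ (∀ x ∈ l, x ∈ S0) ∧
    l.prod = ⟨0, k, 0⟩ := by
  rcases le_or_gt 0 k with hk | hk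
  · refine ⟨List.replicate k.natAbs B, by simp, ?_, ?_⟩
    · intro x hx; rw [List.eq_of_mem_replicate hx]; exact B_mem
    · rw [List.prod_replicate, pow_B]
      ext <;> simp [Int.natAbs_of_nonneg hk]
  · refine ⟨List.replicate k.natAbs B⁻¹, by simp, ?_, ?_⟩
    · intro x hx; rw [List.eq_of_mem_replicate hx]; exact Binv_mem
    · rw [List.prod_replicate, pow_Binv]
      ext <;> simp [abs_of_neg hk]

lemma wordZnat (n : ℕ) : ∃ l : List Hb, (∀ x ∈ l, x ∈ S0) ∧ l.prod = ⟨0, 0, (n : ℤ)⟩ := by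
  induction n with
  | zero => exact ⟨[], by simp, by ext <;> simp⟩
  | succ n ih =>
    obtain ⟨l, hmem, hprod⟩ := ih
    refine ⟨l ++ [A, B, A⁻¹, B⁻¹], ?_, ?_⟩
    · intro x hx
      rcases List.mem_append.1 hx with h | h
      · exact hmem x h
      · simp only [List.mem_cons, List.mem_singleton] at h
        rcases h with h|h|h|h|h <;> first | (subst h; simp [S0]) | exact absurd h (by simp)
    · rw [List.prod_append, hprod]
      ext <;> simp [A, B] <;> push_cast <;> ring

lemma wordZ (k : ℤ) : ∃ l : List Hb, (∀ x ∈ l, x ∈ S0) ∧ l.prod = ⟨0, 0, k⟩ := by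
  rcases le_or_gt 0 k with hk | hk
  · obtain ⟨n, rfl⟩ := Int.eq_ofNat_of_zero_le hk
    exact wordZnat n
  · obtain ⟨l, hmem, hprod⟩ := wordZnat (-k).natAbs
    refine ⟨(l.map (·⁻¹)).reverse, ?_, ?_⟩
    · intro x hx
      simp only [List.mem_reverse, List.mem_map] at hx
      obtain ⟨s, hs, rfl⟩ := hx
      exact inv_mem_S0 (hmem s hs)
    · rw [← List.prod_inv_reverse, hprod]
      ext <;> simp [abs_of_neg hk]

lemma exists_word (g : Hb) : ∃ l : List Hb, (∀ x ∈ l, x ∈ S0) ∧ l.prod = g := by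
  obtain ⟨l1, -, h1m, h1p⟩ := wordX g.x
  obtain ⟨l2, -, h2m, h2p⟩ := wordY g.y
  obtain ⟨l3, h3m, h3p⟩ := wordZ (g.z - g.x * g.y)
  refine ⟨l1 ++ l2 ++ l3, ?_, ?_⟩
  · intro x hx
    rcases List.mem_append.1 hx with h | h
    · rcases List.mem_append.1 h with h | h
      · exact h1m x h
      · exact h2m x h
    · exact h3m x h
  · rw [List.prod_append, List.prod_append, h1p, h2p, h3p]
    ext <;> simp <;> ring

lemma W_nonempty (g : Hb) :
    {n | ∃ l : List Hb, l.length = n ∧ (∀ x ∈ l, x ∈ S0) ∧ l.prod = g}.Nonempty := by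
  obtain ⟨l, hm, hp⟩ := exists_word g
  exact ⟨l.length, l, rfl, hm, hp⟩

lemma W_le {g : Hb} {l : List Hb} (hm : ∀ x ∈ l, x ∈ S0) (hp : l.prod = g) :
    W g ≤ l.length :=
  Nat.sInf_le ⟨l, rfl, hm, hp⟩

lemma exists_min_word (g : Hb) :
    ∃ l : List Hb, l.length = W g ∧ (∀ x ∈ l, x ∈ S0) ∧ l.prod = g :=
  Nat.sInf_mem (W_nonempty g)

lemma W_mul_le (g h : Hb) : W (g * h) ≤ W g + W h := by
  obtain ⟨l1, hl1, h1m, h1p⟩ := exists_min_word g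
  obtain ⟨l2, hl2, h2m, h2p⟩ := exists_min_word h
  calc W (g * h) ≤ (l1 ++ l2).length := by
        refine W_le ?_ ?_
        · intro x hx; rcases List.mem_append.1 hx with hh | hh
          · exact h1m x hh
          · exact h2m x hh
        · rw [List.prod_append, h1p, h2p]
    _ = W g + W h := by simp [hl1, hl2]

lemma W_inv_le (g : Hb) : W g⁻¹ ≤ W g := by
  obtain ⟨l, hl, hm, hp⟩ := exists_min_word g
  have : W g⁻¹ ≤ ((l.map (·⁻¹)).reverse).length := by
    refine W_le ?_ ?_
    · intro x hx
      simp only [List.mem_reverse, List.mem_map] at hx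
      obtain ⟨s, hs, rfl⟩ := hx
      exact inv_mem_S0 (hm s hs)
    · rw [← List.prod_inv_reverse, hp]
  simpa [hl] using this

lemma W_inv (g : Hb) : W g⁻¹ = W g :=
  le_antisymm (W_inv_le g) (by simpa using W_inv_le g⁻¹)

end Hb
end Stmt19Aux

namespace Stmt19Aux
namespace Hb

/-! ### Lower bounds -/

lemma abelian_bound {l : List Hb} (hm : ∀ x ∈ l, x ∈ S0) :
    (l.prod.x).natAbs + (l.prod.y).natAbs ≤ l.length := by
  induction l with
  | nil => simp
  | cons s l ih =>
    have hs := hm s List.mem_cons_self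
    have ih' := ih (fun x hx => hm x (List.mem_cons_of_mem s hx))
    rcases mem_S0 hs with h | h | h | h <;> subst h <;>
      simp only [List.prod_cons, mul_x, mul_y, List.length_cons, A, B, inv_x, inv_y] <;>
      simp <;> omega

lemma parity_bound {l : List Hb} (hm : ∀ x ∈ l, x ∈ S0) :
    (l.length : ℤ) % 2 = (l.prod.x + l.prod.y) % 2 := by
  induction l with
  | nil => simp
  | cons s l ih =>
    have hs := hm s List.mem_cons_self
    have ih' := ih (fun x hx => hm x (List.mem_cons_of_mem s hx))
    rcases mem_S0 hs with h | h | h | h <;> subst h <;>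
      simp only [List.prod_cons, mul_x, mul_y, List.length_cons, A, B, inv_x, inv_y] <;>
      push_cast <;> omega


lemma stepA {x' y' z' : ℤ} (hx : 0 ≤ x') (h1 : min 0 (x' * y') ≤ z')
    (h2 : z' ≤ max 0 (x' * y')) :
    min 0 ((1 + x') * y') ≤ z' + y' ∧ z' + y' ≤ max 0 ((1 + x') * y') := by
  rcases le_total 0 y' with hy | hy
  · have p1 : 0 ≤ x' * y' := mul_nonneg hx hy
    have p2 : 0 ≤ (1 + x') * y' := mul_nonneg (by omega) hy
    rw [min_eq_left p1] at h1; rw [max_eq_right p1] at h2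
    rw [min_eq_left p2, max_eq_right p2]
    have e : (1 + x') * y' = x' * y' + y' := by ring
    constructor <;> linarith
  · have p1 : x' * y' ≤ 0 := mul_nonpos_of_nonneg_of_nonpos hx hy
    have p2 : (1 + x') * y' ≤ 0 := mul_nonpos_of_nonneg_of_nonpos (by omega) hy
    rw [min_eq_right p1] at h1; rw [max_eq_left p1] at h2
    rw [min_eq_right p2, max_eq_left p2]
    have e : (1 + x') * y' = x' * y' + y' := by ring
    constructor <;> linarith

lemma stepAinv {x' y' z' : ℤ} (hx : x' ≤ 0) (h1 : min 0 (x' * y') ≤ z')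
    (h2 : z' ≤ max 0 (x' * y')) :
    min 0 ((-1 + x') * y') ≤ z' - y' ∧ z' - y' ≤ max 0 ((-1 + x') * y') := by
  rcases le_total 0 y' with hy | hy
  · have p1 : x' * y' ≤ 0 := mul_nonpos_of_nonpos_of_nonneg hx hy
    have p2 : (-1 + x') * y' ≤ 0 := mul_nonpos_of_nonpos_of_nonneg (by omega) hy
    rw [min_eq_right p1] at h1; rw [max_eq_left p1] at h2
    rw [min_eq_right p2, max_eq_left p2]
    have e : (-1 + x') * y' = x' * y' - y' := by ring
    constructor <;> linarith
  · have p1 : 0 ≤ x' * y' := by nlinarith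
    have p2 : 0 ≤ (-1 + x') * y' := by nlinarith
    rw [min_eq_left p1] at h1; rw [max_eq_right p1] at h2
    rw [min_eq_left p2, max_eq_right p2]
    have e : (-1 + x') * y' = x' * y' - y' := by ring
    constructor <;> linarith

lemma stepB {x' y' z' : ℤ} (hy : 0 ≤ y') (h1 : min 0 (x' * y') ≤ z')
    (h2 : z' ≤ max 0 (x' * y')) :
    min 0 (x' * (1 + y')) ≤ z' ∧ z' ≤ max 0 (x' * (1 + y')) := by
  rcases le_total 0 x' with hx | hx
  · have p1 : 0 ≤ x' * y' := mul_nonneg hx hy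
    have p2 : 0 ≤ x' * (1 + y') := mul_nonneg hx (by omega)
    rw [min_eq_left p1] at h1; rw [max_eq_right p1] at h2
    rw [min_eq_left p2, max_eq_right p2]
    have e : x' * (1 + y') = x' * y' + x' := by ring
    constructor <;> linarith
  · have p1 : x' * y' ≤ 0 := mul_nonpos_of_nonpos_of_nonneg hx hy
    have p2 : x' * (1 + y') ≤ 0 := mul_nonpos_of_nonpos_of_nonneg hx (by omega)
    rw [min_eq_right p1] at h1; rw [max_eq_left p1] at h2
    rw [min_eq_right p2, max_eq_left p2]
    have e : x' * (1 + y') = x' * y' + x' := by ring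
    constructor <;> linarith

lemma stepBinv {x' y' z' : ℤ} (hy : y' ≤ 0) (h1 : min 0 (x' * y') ≤ z')
    (h2 : z' ≤ max 0 (x' * y')) :
    min 0 (x' * (-1 + y')) ≤ z' ∧ z' ≤ max 0 (x' * (-1 + y')) := by
  rcases le_total 0 x' with hx | hx
  · have p1 : x' * y' ≤ 0 := mul_nonpos_of_nonneg_of_nonpos hx hy
    have p2 : x' * (-1 + y') ≤ 0 := mul_nonpos_of_nonneg_of_nonpos hx (by omega)
    rw [min_eq_right p1] at h1; rw [max_eq_left p1] at h2
    rw [min_eq_right p2, max_eq_left p2]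
    have e : x' * (-1 + y') = x' * y' - x' := by ring
    constructor <;> linarith
  · have p1 : 0 ≤ x' * y' := by nlinarith
    have p2 : 0 ≤ x' * (-1 + y') := by nlinarith
    rw [min_eq_left p1] at h1; rw [max_eq_right p1] at h2
    rw [min_eq_left p2, max_eq_right p2]
    have e : x' * (-1 + y') = x' * y' - x' := by ring
    constructor <;> linarith

lemma tight_range {l : List Hb} (hm : ∀ x ∈ l, x ∈ S0)
    (hlen : l.length = (l.prod.x).natAbs + (l.prod.y).natAbs) :
    min 0 (l.prod.x * l.prod.y) ≤ l.prod.z ∧ l.prod.z ≤ max 0 (l.prod.x * l.prod.y) := by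
  induction l with
  | nil => simp
  | cons s l ih =>
    have hs := hm s List.mem_cons_self
    have hm' : ∀ x ∈ l, x ∈ S0 := fun x hx => hm x (List.mem_cons_of_mem s hx)
    have hab := abelian_bound hm'
    set x' := l.prod.x with hx'
    set y' := l.prod.y with hy'
    set z' := l.prod.z with hz'
    rcases mem_S0 hs with h | h | h | h <;> subst h <;>
      simp only [List.prod_cons, mul_x, mul_y, mul_z, List.length_cons, A, B, inv_x,
        inv_y, inv_z, ← hx', ← hy', ← hz'] at hlen ⊢
    · -- s = A
      have hx0 : 0 ≤ x' := by omega
      obtain ⟨h1, h2⟩ := ih hm' (by omega)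
      have e1 : (1 + x') * (0 + y') = (1 + x') * y' := by ring
      have e2 : 0 + z' + 1 * y' = z' + y' := by ring
      rw [e1, e2]
      exact stepA hx0 h1 h2
    · -- s = A⁻¹
      have hx0 : x' ≤ 0 := by omega
      obtain ⟨h1, h2⟩ := ih hm' (by omega)
      have e1 : (-1 + x') * (-0 + y') = (-1 + x') * y' := by ring
      have e2 : 1 * 0 - 0 + z' + -1 * y' = z' - y' := by ring
      rw [e1, e2]
      exact stepAinv hx0 h1 h2
    · -- s = B
      have hy0 : 0 ≤ y' := by omega
      obtain ⟨h1, h2⟩ := ih hm' (by omega)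
      have e1 : (0 + x') * (1 + y') = x' * (1 + y') := by ring
      have e2 : 0 + z' + 0 * y' = z' := by ring
      rw [e1, e2]
      exact stepB hy0 h1 h2
    · -- s = B⁻¹
      have hy0 : y' ≤ 0 := by omega
      obtain ⟨h1, h2⟩ := ih hm' (by omega)
      have e1 : (-0 + x') * (-1 + y') = x' * (-1 + y') := by ring
      have e2 : 0 * 1 - 0 + z' + -0 * y' = z' := by ring
      rw [e1, e2]
      exact stepBinv hy0 h1 h2

end Hb
end Stmt19Aux

namespace Stmt19Aux
namespace Hb

lemma W_ge_ab (g : Hb) : g.x.natAbs + g.y.natAbs ≤ W g := by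
  obtain ⟨l, hl, hm, hp⟩ := exists_min_word g
  have := abelian_bound hm
  rw [hp, hl] at this
  exact this

lemma W_parity (g : Hb) : ((W g : ℤ)) % 2 = (g.x + g.y) % 2 := by
  obtain ⟨l, hl, hm, hp⟩ := exists_min_word g
  have := parity_bound hm
  rw [hp, hl] at this
  exact this

lemma W_tight (g : Hb) (h : W g = g.x.natAbs + g.y.natAbs) :
    min 0 (g.x * g.y) ≤ g.z ∧ g.z ≤ max 0 (g.x * g.y) := by
  obtain ⟨l, hl, hm, hp⟩ := exists_min_word g
  have := tight_range hm (by rw [hp, hl, h])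
  rwa [hp] at this

lemma W_upper_block (α δ : ℤ) (β ξ : ℕ) :
    W ⟨(β : ℤ) + ξ, α + δ, (β : ℤ) * δ⟩ ≤ α.natAbs + β + δ.natAbs + ξ := by
  obtain ⟨l1, h1l, h1m, h1p⟩ := wordY α
  obtain ⟨l2, h2l, h2m, h2p⟩ := wordX (β : ℤ)
  obtain ⟨l3, h3l, h3m, h3p⟩ := wordY δ
  obtain ⟨l4, h4l, h4m, h4p⟩ := wordX (ξ : ℤ)
  have hmem : ∀ x ∈ l1 ++ l2 ++ l3 ++ l4, x ∈ S0 := by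
    intro x hx
    rcases List.mem_append.1 hx with h | h
    · rcases List.mem_append.1 h with h | h
      · rcases List.mem_append.1 h with h | h
        · exact h1m x h
        · exact h2m x h
      · exact h3m x h
    · exact h4m x h
  have hprod : (l1 ++ l2 ++ l3 ++ l4).prod = ⟨(β : ℤ) + ξ, α + δ, (β : ℤ) * δ⟩ := by
    rw [List.prod_append, List.prod_append, List.prod_append, h1p, h2p, h3p, h4p]
    ext <;> simp <;> ring
  have := W_le hmem hprod
  simp only [List.length_append, h1l, h2l, h3l, h4l, Int.natAbs_natCast] at this
  omega

lemma E1 {X Y Z : ℤ} (hY : 1 ≤ Y) (hZ0 : 0 ≤ Z) (hZX : Z ≤ X) :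
    (W ⟨X, Y, Z⟩ : ℤ) = X + Y := by
  have hX : 0 ≤ X := le_trans hZ0 hZX
  have hup := W_upper_block (Y - 1) 1 Z.toNat (X - Z).toNat
  have he : (⟨(Z.toNat : ℤ) + (X - Z).toNat, (Y - 1) + 1, (Z.toNat : ℤ) * 1⟩ : Hb)
      = ⟨X, Y, Z⟩ := by
    ext <;> simp <;> omega
  rw [he] at hup
  have hlow := W_ge_ab ⟨X, Y, Z⟩
  simp only at hlow
  omega

lemma E2 {X Z : ℤ} (h0 : 0 < Z) (hZX : Z ≤ X) : (W ⟨X, 0, Z⟩ : ℤ) = X + 2 := by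
  have hX : 0 < X := lt_of_lt_of_le h0 hZX
  have hup := W_upper_block (-1) 1 Z.toNat (X - Z).toNat
  have he : (⟨(Z.toNat : ℤ) + (X - Z).toNat, (-1) + 1, (Z.toNat : ℤ) * 1⟩ : Hb)
      = ⟨X, 0, Z⟩ := by
    ext <;> simp <;> omega
  rw [he] at hup
  have hlow := W_ge_ab ⟨X, 0, Z⟩
  have hpar := W_parity ⟨X, 0, Z⟩
  simp only at hlow hpar
  have hne : W ⟨X, 0, Z⟩ ≠ (⟨X, 0, Z⟩ : Hb).x.natAbs + (⟨X, 0, Z⟩ : Hb).y.natAbs := by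
    intro h
    have := W_tight _ h
    simp only at this
    omega
  simp only at hne
  omega

lemma E3 {X Y Z : ℤ} (hY : Y ≤ -1) (h0 : 0 < Z) (hZX : Z ≤ X) :
    (W ⟨X, Y, Z⟩ : ℤ) = X - Y + 2 := by
  have hX : 0 < X := lt_of_lt_of_le h0 hZX
  have hup := W_upper_block (Y - 1) 1 Z.toNat (X - Z).toNat
  have he : (⟨(Z.toNat : ℤ) + (X - Z).toNat, (Y - 1) + 1, (Z.toNat : ℤ) * 1⟩ : Hb)
      = ⟨X, Y, Z⟩ := by
    ext <;> simp <;> omega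
  rw [he] at hup
  have hlow := W_ge_ab ⟨X, Y, Z⟩
  have hpar := W_parity ⟨X, Y, Z⟩
  simp only at hlow hpar
  have hne : W ⟨X, Y, Z⟩ ≠ (⟨X, Y, Z⟩ : Hb).x.natAbs + (⟨X, Y, Z⟩ : Hb).y.natAbs := by
    intro h
    have h2 := W_tight _ h
    simp only at h2
    have hxy : X * Y ≤ 0 := by nlinarith
    rw [min_eq_right hxy, max_eq_left hxy] at h2
    omega
  simp only at hne
  omega

lemma E4 {X : ℤ} (hX : 1 ≤ X) : (W ⟨X, 1, -1⟩ : ℤ) = X + 3 := by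
  have hup := W_upper_block 2 (-1) 1 (X - 1).toNat
  have he : (⟨(1 : ℕ) + ((X - 1).toNat : ℤ), 2 + (-1), (1 : ℕ) * (-1)⟩ : Hb)
      = ⟨X, 1, -1⟩ := by
    ext <;> simp <;> omega
  rw [he] at hup
  have hlow := W_ge_ab ⟨X, 1, -1⟩
  have hpar := W_parity ⟨X, 1, -1⟩
  simp only at hlow hpar
  have hne : W ⟨X, 1, -1⟩ ≠ (⟨X, 1, -1⟩ : Hb).x.natAbs + (⟨X, 1, -1⟩ : Hb).y.natAbs := by
    intro h
    have h2 := W_tight _ h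
    simp only at h2
    have hxy : (0:ℤ) ≤ X * 1 := by omega
    rw [min_eq_left hxy, max_eq_right hxy] at h2
    omega
  simp only at hne
  omega

end Hb
end Stmt19Aux

namespace Stmt19Aux
namespace Hb

def psi (n : ℕ) : Hb := ⟨n, 1, (n : ℤ) / 2⟩

lemma W_psi (n : ℕ) : (W (psi n) : ℤ) = n + 1 := by
  have := E1 (X := (n : ℤ)) (Y := 1) (Z := (n : ℤ) / 2) le_rfl (by omega) (by omega)
  simpa [psi] using this

lemma eventual (v : Hb) : ∃ N : ℕ, ∀ n : ℕ, N ≤ n →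
    (W ((psi n)⁻¹ * v) : ℤ) = (n + 1) + (-(v.x) + |v.y|) := by
  set p := v.x with hp
  set q := v.y with hq
  set r := v.z with hr
  set c : ℤ := p * q - r - p with hc
  refine ⟨2 * (c.natAbs + p.natAbs + q.natAbs) + 8, fun n hn => ?_⟩
  have hinv : ((psi n)⁻¹ * v)⁻¹ = v⁻¹ * psi n := by
    rw [mul_inv_rev, inv_inv]
  have hcoord : v⁻¹ * psi n = ⟨(n : ℤ) - p, 1 - q, (n : ℤ) / 2 + c⟩ := by
    ext <;> simp [psi, ← hp, ← hq, ← hr, hc] <;> ring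
  rw [← W_inv ((psi n)⁻¹ * v), hinv, hcoord]
  have hZ0 : 0 < (n : ℤ) / 2 + c := by omega
  have hZX : (n : ℤ) / 2 + c ≤ (n : ℤ) - p := by omega
  rcases le_or_gt q 0 with hq0 | hq0
  · rw [E1 (by omega) (le_of_lt hZ0) hZX, abs_of_nonpos hq0]
    ring
  · rcases eq_or_lt_of_le (show (0:ℤ) + 1 ≤ q by omega) with hq1 | hq1
    · have hq1' : q = 1 := by omega
      rw [hq1', show (1 : ℤ) - 1 = 0 by norm_num, E2 hZ0 hZX, abs_one]
      ring
    · rw [E3 (by omega) hZ0 hZX, abs_of_nonneg (le_of_lt hq0)]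
      ring

end Hb
end Stmt19Aux

namespace Stmt19Aux

lemma wordDist_equiv {G K : Type*} [Group G] [Group K] (e : G ≃* K) (S : Set G)
    (g h : G) : wordDist S g h = wordDist (e '' S) (e g) (e h) := by
  unfold wordDist
  congr 1
  ext n
  constructor
  · rintro ⟨l, rfl, hm, hp⟩
    refine ⟨l.map e, by simp, ?_, ?_⟩
    · intro x hx
      simp only [List.mem_map] at hx
      obtain ⟨s, hs, rfl⟩ := hx
      exact ⟨s, hm s hs, rfl⟩
    · rw [show (⇑e) = ⇑(e : G →* K) from rfl, ← map_list_prod (e : G →* K) l]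
      simp [hp]
  · rintro ⟨l, rfl, hm, hp⟩
    refine ⟨l.map e.symm, by simp, ?_, ?_⟩
    · intro x hx
      simp only [List.mem_map] at hx
      obtain ⟨s, hs, rfl⟩ := hx
      obtain ⟨u, hu, rfl⟩ := hm s hs
      simpa using hu
    · rw [show (⇑e.symm) = ⇑(e.symm : K →* G) from rfl,
        ← map_list_prod (e.symm : K →* G) l]
      simp [hp]

lemma wordDist_eq_W (g h : Hb) : wordDist Hb.S0 g h = Hb.W (g⁻¹ * h) := rfl

end Stmt19Aux

namespace Stmt19Aux

section Transport

variable {H : Type*} [Group H]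

/-- coordinates map -/
def toHb (ι : H → Matrix (Fin 3) (Fin 3) ℤ) (g : H) : Hb :=
  ⟨ι g 0 1, ι g 1 2, ι g 0 2⟩

lemma mem_uni {ι : H → Matrix (Fin 3) (Fin 3) ℤ}
    (hrange : Set.range ι = Unitriangular3) (g : H) : ι g ∈ Unitriangular3 :=
  hrange ▸ Set.mem_range_self g

lemma toHb_mul {ι : H → Matrix (Fin 3) (Fin 3) ℤ}
    (hrange : Set.range ι = Unitriangular3)
    (hmul : ∀ g h : H, ι (g * h) = ι g * ι h) (g h : H) :
    toHb ι (g * h) = toHb ι g * toHb ι h := by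
  obtain ⟨g1, g2, g3, g4, g5, g6⟩ := mem_uni hrange g
  obtain ⟨h1, h2, h3, h4, h5, h6⟩ := mem_uni hrange h
  ext <;> simp only [toHb, hmul, Matrix.mul_apply, Fin.sum_univ_three, Hb.mul_x, Hb.mul_y,
    Hb.mul_z, g1, g2, g3, g4, g5, g6, h1, h2, h3, h4, h5, h6] <;> ring

lemma toHb_inj {ι : H → Matrix (Fin 3) (Fin 3) ℤ}
    (hrange : Set.range ι = Unitriangular3) (hinj : Function.Injective ι) :
    Function.Injective (toHb ι) := by
  intro g h hgh
  obtain ⟨g1, g2, g3, g4, g5, g6⟩ := mem_uni hrange g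
  obtain ⟨h1, h2, h3, h4, h5, h6⟩ := mem_uni hrange h
  simp only [toHb, Hb.mk.injEq] at hgh
  obtain ⟨e1, e2, e3⟩ := hgh
  apply hinj
  ext i j
  fin_cases i <;> fin_cases j <;> simp_all

lemma toHb_surj {ι : H → Matrix (Fin 3) (Fin 3) ℤ}
    (hrange : Set.range ι = Unitriangular3) :
    Function.Surjective (toHb ι) := by
  intro v
  have hmem : !![1, v.x, v.z; 0, 1, v.y; 0, 0, 1] ∈ Unitriangular3 := by
    refine ⟨?_, ?_, ?_, ?_, ?_, ?_⟩ <;> simp [Unitriangular3, Matrix.vecHead, Matrix.vecTail]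
  rw [← hrange] at hmem
  obtain ⟨g, hg⟩ := hmem
  refine ⟨g, ?_⟩
  ext <;> simp [toHb, hg]

end Transport

end Stmt19Aux


open Stmt19Aux Stmt19Aux.Hb in
/-- Let `H` be the discrete Heisenberg group (any group identified, via an
injective multiplicative map `ι`, with the group of 3×3 upper unitriangular integer
matrices), with `a`, `b` the standard generators. Then the metric boundary of the Cayley
graph of `H` with generating set `S = {a, a⁻¹, b, b⁻¹}` contains a point which is not a
Busemann point. -/
theorem stmt19 {H : Type*} [Group H] (ι : H → Matrix (Fin 3) (Fin 3) ℤ)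
    (hinj : Function.Injective ι)
    (hmul : ∀ g h : H, ι (g * h) = ι g * ι h)
    (hrange : Set.range ι = Unitriangular3)
    (a b : H)
    (ha : ι a = !![1, 1, 0; 0, 1, 0; 0, 0, 1])
    (hb : ι b = !![1, 0, 0; 0, 1, 1; 0, 0, 1]) :
    ∃ T : Set ℝ, ∃ γ : ℝ → H, IsRayDomain T ∧
      WeaklyGeodesicRay (fun g h => (wordDist {a, a⁻¹, b, b⁻¹} g h : ℝ)) T γ ∧
      ∀ (T' : Set ℝ) (γ' : ℝ → H), IsRayDomain T' →
        GeodesicRay (fun g h => (wordDist {a, a⁻¹, b, b⁻¹} g h : ℝ)) T' γ' →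
        ∃ (y z : H) (L L' : ℝ),
          RayLimit (fun g h => (wordDist {a, a⁻¹, b, b⁻¹} g h : ℝ)) T γ y z L ∧
          RayLimit (fun g h => (wordDist {a, a⁻¹, b, b⁻¹} g h : ℝ)) T' γ' y z L' ∧
          L ≠ L' := by
  classical
  -- Build the multiplicative equivalence with the concrete Heisenberg group `Hb`.
  let F : H →* Hb := MonoidHom.mk' (toHb ι) (toHb_mul hrange hmul)
  have hbij : Function.Bijective F := ⟨toHb_inj hrange hinj, toHb_surj hrange⟩
  let e : H ≃* Hb := MulEquiv.ofBijective F hbij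
  have he : ∀ g : H, e g = toHb ι g := fun g => rfl
  have hea : e a = Hb.A := by
    rw [he]; ext <;> simp [toHb, ha, Hb.A]
  have heb : e b = Hb.B := by
    rw [he]; ext <;> simp [toHb, hb, Hb.B]
  have himg : ⇑e '' {a, a⁻¹, b, b⁻¹} = S0 := by
    rw [Set.image_insert_eq, Set.image_insert_eq, Set.image_insert_eq, Set.image_singleton]
    simp only [map_inv, hea, heb]
    rfl
  have dd : ∀ g h : H, wordDist {a, a⁻¹, b, b⁻¹} g h = W ((e g)⁻¹ * e h) := by
    intro g h
    rw [wordDist_equiv e _ g h, himg]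
    rfl
  -- the ray
  set T : Set ℝ := insert 0 {t | ∃ m : ℕ, 2 ≤ m ∧ t = (m : ℝ)} with hTdef
  set γ : ℝ → H := fun t => if t < 2 then e.symm 1 else e.symm (psi (Int.toNat ⌊t⌋ - 1))
    with hγdef
  have hγ0 : γ 0 = e.symm 1 := by simp [hγdef]
  have hγm : ∀ m : ℕ, 2 ≤ m → γ (m : ℝ) = e.symm (psi (m - 1)) := by
    intro m hm
    have h2 : ¬((m : ℝ) < 2) := by
      push_neg
      exact_mod_cast hm
    simp [hγdef, h2]
  have hmemT : ∀ m : ℕ, 2 ≤ m → ((m : ℝ) ∈ T) := by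
    intro m hm; exact Set.mem_insert_iff.2 (Or.inr ⟨m, hm, rfl⟩)
  -- radial distances
  have hWt : ∀ m : ℕ, 2 ≤ m → ((wordDist {a, a⁻¹, b, b⁻¹} (γ (m : ℝ)) (γ 0) : ℤ)) = m := by
    intro m hm
    rw [dd, hγm m hm, hγ0, MulEquiv.apply_symm_apply, MulEquiv.apply_symm_apply, mul_one,
      W_inv]
    have := W_psi (m - 1)
    rw [this]
    omega
  -- distances to an arbitrary point
  have hWy : ∀ y : H, ∃ N : ℕ, ∀ m : ℕ, N ≤ m →
      ((wordDist {a, a⁻¹, b, b⁻¹} (γ (m : ℝ)) y : ℤ)) = m + (-(e y).x + |(e y).y|) := by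
    intro y
    obtain ⟨N₀, hN₀⟩ := eventual (e y)
    refine ⟨N₀ + 2, fun m hm => ?_⟩
    rw [dd, hγm m (by omega), MulEquiv.apply_symm_apply]
    have := hN₀ (m - 1) (by omega)
    rw [this]
    omega
  refine ⟨T, γ, ⟨?_, Set.mem_insert _ _, ?_⟩, ?_, ?_⟩
  · -- T ⊆ [0, ∞)
    rintro t (rfl | ⟨m, hm, rfl⟩)
    · exact Set.mem_Ici.2 (le_refl 0)
    · exact Set.mem_Ici.2 (by positivity)
  · -- unbounded
    intro M
    refine ⟨((⌈M⌉.toNat + 2 : ℕ) : ℝ), hmemT _ (by omega), ?_⟩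
    have h1 : M ≤ (⌈M⌉ : ℝ) := Int.le_ceil M
    have h2 : (⌈M⌉ : ℝ) ≤ ((⌈M⌉.toNat : ℤ) : ℝ) := by
      exact_mod_cast Int.self_le_toNat _
    push_cast at h2 ⊢
    linarith
  · -- weakly geodesic
    intro y ε hε
    obtain ⟨N₀, hN₀⟩ := hWy y
    refine ⟨((N₀ + 2 : ℕ) : ℝ), ?_⟩
    intro s hs t ht hNs hNt
    have hpos : (0 : ℝ) < ((N₀ + 2 : ℕ) : ℝ) := by positivity
    rcases ht with rfl | ⟨mt, hmt2, rfl⟩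
    · linarith
    rcases hs with rfl | ⟨ms, hms2, rfl⟩
    · linarith
    have hmtN : N₀ + 2 ≤ mt := by exact_mod_cast hNt
    have hmsN : N₀ + 2 ≤ ms := by exact_mod_cast hNs
    have h1 : ((wordDist {a, a⁻¹, b, b⁻¹} (γ (mt : ℝ)) (γ 0) : ℝ)) = (mt : ℝ) := by
      have := hWt mt (by omega)
      exact_mod_cast this
    have h2 : ((wordDist {a, a⁻¹, b, b⁻¹} (γ (mt : ℝ)) y : ℝ))
        = (mt : ℝ) + ((-(e y).x + |(e y).y| : ℤ) : ℝ) := by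
      have := hN₀ mt (by omega)
      push_cast
      exact_mod_cast this
    have h3 : ((wordDist {a, a⁻¹, b, b⁻¹} (γ (ms : ℝ)) y : ℝ))
        = (ms : ℝ) + ((-(e y).x + |(e y).y| : ℤ) : ℝ) := by
      have := hN₀ ms (by omega)
      push_cast
      exact_mod_cast this
    beta_reduce
    constructor
    · rw [h1]; simpa using hε
    · rw [h2, h3]
      simpa using hε
  · -- main part
    intro T' γ' hT' hgeo
    obtain ⟨hsub', h0', hunb'⟩ := hT'
    -- every point of T' is a natural number
    have tnat : ∀ t ∈ T', ∃ n : ℕ,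
        (t : ℝ) = (n : ℝ) ∧ (n : ℕ) = wordDist {a, a⁻¹, b, b⁻¹} (γ' 0) (γ' t) := by
      intro t ht
      have h := hgeo 0 h0' t ht
      have ht0 : 0 ≤ t := hsub' ht
      refine ⟨wordDist {a, a⁻¹, b, b⁻¹} (γ' 0) (γ' t), ?_, rfl⟩
      beta_reduce at h
      rw [h, abs_of_nonpos (by linarith)]
      ring
    -- eventual linearity of distances along the geodesic ray
    have M1 : ∀ v : Hb, ∃ (mv : ℤ) (N : ℝ), ∀ t ∈ T', N ≤ t →
        ((W ((e (γ' t))⁻¹ * v) : ℤ) : ℝ) = t + mv := by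
      intro v
      have mono : ∀ s ∈ T', ∀ t ∈ T', s ≤ t →
          (W ((e (γ' t))⁻¹ * v) : ℝ) - t ≤ (W ((e (γ' s))⁻¹ * v) : ℝ) - s := by
        intro s hs t ht hst
        have key : W ((e (γ' t))⁻¹ * v) ≤
            W ((e (γ' t))⁻¹ * e (γ' s)) + W ((e (γ' s))⁻¹ * v) := by
          have := W_mul_le ((e (γ' t))⁻¹ * e (γ' s)) ((e (γ' s))⁻¹ * v)
          simpa [mul_assoc] using this
        have hd : ((W ((e (γ' t))⁻¹ * e (γ' s)) : ℕ) : ℝ) = t - s := by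
          have h := hgeo t ht s hs
          beta_reduce at h
          rw [dd] at h
          rw [h, abs_of_nonneg (by linarith)]
        have : ((W ((e (γ' t))⁻¹ * v) : ℕ) : ℝ) ≤ (t - s) + W ((e (γ' s))⁻¹ * v) := by
          rw [← hd]
          exact_mod_cast key
        linarith
      have lb : ∀ t ∈ T', -((W ((e (γ' 0))⁻¹ * v) : ℕ) : ℝ) ≤ (W ((e (γ' t))⁻¹ * v) : ℝ) - t := by
        intro t ht
        obtain ⟨n, hn, hn2⟩ := tnat t ht
        have key : W ((e (γ' 0))⁻¹ * e (γ' t)) ≤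
            W ((e (γ' 0))⁻¹ * v) + W ((e (γ' t))⁻¹ * v) := by
          have h1 := W_mul_le ((e (γ' 0))⁻¹ * v) (v⁻¹ * e (γ' t))
          have h2 : W (v⁻¹ * e (γ' t)) = W ((e (γ' t))⁻¹ * v) := by
            rw [← W_inv ((e (γ' t))⁻¹ * v), mul_inv_rev, inv_inv]
          rw [h2] at h1
          simpa [mul_assoc] using h1
        have hW0 : W ((e (γ' 0))⁻¹ * e (γ' t)) = n := by
          rw [← dd]; exact hn2.symm
        have hteq : (t : ℝ) = ((W ((e (γ' 0))⁻¹ * e (γ' t)) : ℕ) : ℝ) := by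
          rw [hW0]; exact_mod_cast hn
        have hcast := (Nat.cast_le (α := ℝ)).2 key
        push_cast at hcast
        linarith [hteq, hcast]
      set P : ℤ → Prop := fun k => ∃ t ∈ T', (W ((e (γ' t))⁻¹ * v) : ℝ) - t = (k : ℝ)
        with hPdef
      have hbdd : ∃ bd : ℤ, ∀ k : ℤ, P k → bd ≤ k := by
        refine ⟨-(W ((e (γ' 0))⁻¹ * v) : ℤ), fun k hk => ?_⟩
        obtain ⟨t, ht, hkt⟩ := hk
        have := lb t ht
        rw [hkt] at this
        exact_mod_cast this
      have hex : ∃ k : ℤ, P k := by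
        refine ⟨(W ((e (γ' 0))⁻¹ * v) : ℤ), 0, h0', ?_⟩
        push_cast
        ring
      obtain ⟨mv, ⟨t₀, ht₀, ht₀v⟩, hmin⟩ := Int.exists_least_of_bdd hbdd hex
      refine ⟨mv, t₀, fun t ht hle => ?_⟩
      have h1 : (W ((e (γ' t))⁻¹ * v) : ℝ) - t ≤ (mv : ℝ) := by
        rw [← ht₀v]
        exact mono t₀ ht₀ t ht hle
      obtain ⟨n, hn, hn2⟩ := tnat t ht
      have h2 : P ((W ((e (γ' t))⁻¹ * v) : ℤ) - n) := by
        refine ⟨t, ht, ?_⟩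
        rw [hn]
        push_cast
        ring
      have h3 := hmin _ h2
      have h4 : ((W ((e (γ' t))⁻¹ * v) : ℤ) - n : ℤ) ≤ mv := by
        have : (((W ((e (γ' t))⁻¹ * v) : ℤ) - n : ℤ) : ℝ) ≤ (mv : ℝ) := by
          push_cast
          linarith [h1, hn]
        exact_mod_cast this
      have h5 : (W ((e (γ' t))⁻¹ * v) : ℤ) - n = mv := le_antisymm h4 h3
      have h5' : (((W ((e (γ' t))⁻¹ * v) : ℤ)) : ℝ) - (n : ℝ) = (mv : ℝ) := by
        exact_mod_cast congrArg (fun z : ℤ => (z : ℝ)) h5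
      linarith [hn, h5']
    choose mf Nf hmf using M1
    -- case split
    by_cases hc : ∀ v w : Hb, mf v - mf w = (-v.x + |v.y|) - (-w.x + |w.y|)
    · -- contradiction case: the geodesic would have to be an `a`-ray
      exfalso
      set μ : ℤ := mf 1 with hμ
      set y₁ : Hb := (⟨0, -1, 1⟩ : Hb) with hy₁
      obtain ⟨t, ht, hlarge⟩ := hunb' (max (max (Nf 1) (Nf y₁)) (((|μ| + 2 : ℤ) : ℝ)))
      obtain ⟨n, hn, hn2⟩ := tnat t ht
      set g : Hb := e (γ' t) with hg
      -- mf g = -n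
      have hmft : (mf g : ℝ) = -(n : ℝ) := by
        obtain ⟨t2, ht2, ht2big⟩ := hunb' (max (Nf g) t)
        have h1 := hmf g t2 ht2 (le_trans (le_max_left _ _) (le_of_lt ht2big))
        have htle : t ≤ t2 := le_trans (le_max_right _ _) (le_of_lt ht2big)
        have h2 : ((W ((e (γ' t2))⁻¹ * g) : ℕ) : ℝ) = t2 - t := by
          have h := hgeo t2 ht2 t ht
          beta_reduce at h
          rw [dd] at h
          rw [← hg] at h
          rw [h, abs_of_nonneg (by linarith)]
        have h2' : ((W ((e (γ' t2))⁻¹ * g) : ℤ) : ℝ) = t2 - t := by exact_mod_cast h2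
        rw [h2'] at h1
        linarith [h1, hn]
      have hmftZ : mf g = -(n : ℤ) := by exact_mod_cast hmft
      -- coordinates of g
      have hcx := hc g 1
      have h1x : (1 : Hb).x = 0 := rfl
      have h1y : (1 : Hb).y = 0 := rfl
      rw [hmftZ, h1x, h1y] at hcx
      simp only [abs_zero, neg_zero, add_zero, sub_zero, zero_add] at hcx
      -- W g = n + μ
      have hWg : ((W g : ℤ)) = (n : ℤ) + μ := by
        have h1 := hmf 1 t ht
          (le_trans (le_trans (le_max_left _ _) (le_max_left _ _)) (le_of_lt hlarge))
        rw [mul_one, W_inv, ← hg] at h1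
        have h1' : ((W g : ℤ) : ℝ) = (n : ℝ) + (μ : ℝ) := by
          rw [h1, hn]
        exact_mod_cast h1'
      have hab := W_ge_ab g
      have habZ : (g.x.natAbs : ℤ) + (g.y.natAbs : ℤ) ≤ (W g : ℤ) := by exact_mod_cast hab
      have habs : |g.y| = (g.y.natAbs : ℤ) := Int.abs_eq_natAbs _
      rw [habs] at hcx
      have hq0 : g.y = 0 := by omega
      have hpx : g.x = (n : ℤ) + μ := by omega
      have hWeq : W g = g.x.natAbs + g.y.natAbs := by
        have : (W g : ℤ) = (g.x.natAbs : ℤ) + (g.y.natAbs : ℤ) := by omega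
        exact_mod_cast this
      have htight := W_tight g hWeq
      rw [hq0] at htight
      simp only [mul_zero, min_self, max_self] at htight
      have hrz : g.z = 0 := le_antisymm htight.2 htight.1
      have hgeq : g = (⟨(n : ℤ) + μ, 0, 0⟩ : Hb) := by
        ext
        · exact hpx
        · exact hq0
        · exact hrz
      -- evaluate distance to y₁
      have hX1 : (1 : ℤ) ≤ (n : ℤ) + μ := by
        have h1 : (((|μ| + 2 : ℤ)) : ℝ) ≤ t := le_trans (le_max_right _ _) (le_of_lt hlarge)
        rw [hn] at h1
        have h2 : (|μ| + 2 : ℤ) ≤ (n : ℤ) := by exact_mod_cast h1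
        have h3 := neg_abs_le μ
        omega
      have hcomp : ((W (g⁻¹ * y₁) : ℤ)) = (n : ℤ) + μ + 3 := by
        rw [← W_inv (g⁻¹ * y₁), mul_inv_rev, inv_inv]
        have hyg : y₁⁻¹ * g = (⟨(n : ℤ) + μ, 1, -1⟩ : Hb) := by
          rw [hgeq, hy₁]
          ext <;> simp
        rw [hyg]
        exact E4 hX1
      have hy1 := hmf y₁ t ht
        (le_trans (le_trans (le_max_right _ _) (le_max_left _ _)) (le_of_lt hlarge))
      rw [← hg] at hy1
      have hmfy : mf y₁ = μ + 3 := by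
        have h2 : ((W (g⁻¹ * y₁) : ℤ) : ℝ) = (n : ℝ) + (μ : ℝ) + 3 := by
          rw [hcomp]; push_cast; ring
        have h1 : (mf y₁ : ℝ) = (μ : ℝ) + 3 := by linarith [hy1, hn, h2]
        exact_mod_cast h1
      -- but hc forces mf y₁ = μ + 1
      have hcy := hc y₁ 1
      have hy1x : y₁.x = 0 := rfl
      have hy1y : y₁.y = -1 := rfl
      rw [h1x, h1y, hy1x, hy1y] at hcy
      norm_num at hcy
      omega
    · push_neg at hc
      obtain ⟨v, w, hvw⟩ := hc
      refine ⟨e.symm v, e.symm w,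
        (((-v.x + |v.y|) - (-w.x + |w.y|) : ℤ) : ℝ), ((mf v - mf w : ℤ) : ℝ), ?_, ?_, ?_⟩
      · -- RayLimit along γ
        obtain ⟨N₁, hN₁⟩ := hWy (e.symm v)
        obtain ⟨N₂, hN₂⟩ := hWy (e.symm w)
        have hev : ∀ᶠ u in atTop ⊓ 𝓟 T,
            (wordDist {a, a⁻¹, b, b⁻¹} (γ u) (e.symm v) : ℝ)
              - (wordDist {a, a⁻¹, b, b⁻¹} (γ u) (e.symm w) : ℝ)
            = (((-v.x + |v.y|) - (-w.x + |w.y|) : ℤ) : ℝ) := by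
          rw [Filter.eventually_inf_principal]
          filter_upwards [Filter.eventually_ge_atTop ((N₁ + N₂ + 2 : ℕ) : ℝ)] with u hu huT
          rcases huT with rfl | ⟨m, hm2, rfl⟩
          · have : (0:ℝ) < ((N₁ + N₂ + 2 : ℕ) : ℝ) := by positivity
            linarith
          have hmN : N₁ + N₂ + 2 ≤ m := by exact_mod_cast hu
          have e1 := hN₁ m (by omega)
          have e2 := hN₂ m (by omega)
          rw [MulEquiv.apply_symm_apply] at e1 e2
          have e1' : (wordDist {a, a⁻¹, b, b⁻¹} (γ (m:ℝ)) (e.symm v) : ℝ)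
              = (m : ℝ) + ((-v.x + |v.y| : ℤ) : ℝ) := by exact_mod_cast e1
          have e2' : (wordDist {a, a⁻¹, b, b⁻¹} (γ (m:ℝ)) (e.symm w) : ℝ)
              = (m : ℝ) + ((-w.x + |w.y| : ℤ) : ℝ) := by exact_mod_cast e2
          rw [e1', e2']
          push_cast
          ring
        unfold RayLimit
        refine Filter.Tendsto.congr' ?_ tendsto_const_nhds
        exact hev.mono fun u hu => hu.symm
      · -- RayLimit along γ'
        have hev : ∀ᶠ u in atTop ⊓ 𝓟 T',
            (wordDist {a, a⁻¹, b, b⁻¹} (γ' u) (e.symm v) : ℝ)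
              - (wordDist {a, a⁻¹, b, b⁻¹} (γ' u) (e.symm w) : ℝ)
            = ((mf v - mf w : ℤ) : ℝ) := by
          rw [Filter.eventually_inf_principal]
          filter_upwards [Filter.eventually_ge_atTop (max (Nf v) (Nf w))] with u hu huT
          have e1 := hmf v u huT (le_trans (le_max_left _ _) hu)
          have e2 := hmf w u huT (le_trans (le_max_right _ _) hu)
          have d1 : (wordDist {a, a⁻¹, b, b⁻¹} (γ' u) (e.symm v) : ℝ) = u + (mf v : ℝ) := by
            rw [dd, MulEquiv.apply_symm_apply]
            exact_mod_cast e1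
          have d2 : (wordDist {a, a⁻¹, b, b⁻¹} (γ' u) (e.symm w) : ℝ) = u + (mf w : ℝ) := by
            rw [dd, MulEquiv.apply_symm_apply]
            exact_mod_cast e2
          rw [d1, d2]
          push_cast
          ring
        unfold RayLimit
        refine Filter.Tendsto.congr' ?_ tendsto_const_nhds
        exact hev.mono fun u hu => hu.symm
      · -- the two limits differ
        intro hLL
        apply hvw
        have : ((-v.x + |v.y|) - (-w.x + |w.y|) : ℤ) = (mf v - mf w : ℤ) := by
          exact_mod_cast hLL
        omega
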